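/- Let φ(s) = (1-s)log(1-s) for s ∈ [0,1) and let f_t(s) = 1 - (1-s)^{e^{-t}}. Then f satisfies the flow equation ∂_t f_t(s) = φ(f_t(s)) with f_0(s) = s, and its inverse in s is g_t(s) = 1 - (1-s)^{e^t}. Moreover, for fixed s ∈ (0,1) and α > 0, lim_{t→∞} f_t(g_t(s)^α) = s, i.e., lim_{t→∞} 1 - (1 - (1 - (1-s)^{e^t})^α)^{e^{-t}} = s. -/

import Mathlib

open Real Filter Topology

theorem stmt_19 :
    (∀ s ∈ Set.Ico (0:ℝ) 1, ∀ t : ℝ,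
      HasDerivAt (fun t : ℝ => 1 - (1 - s) ^ (Real.exp (-t)))
        ((1 - (1 - (1 - s) ^ (Real.exp (-t)))) *
          Real.log (1 - (1 - (1 - s) ^ (Real.exp (-t))))) t) ∧
    (∀ s ∈ Set.Icc (0:ℝ) 1, 1 - (1 - s) ^ (Real.exp (-(0:ℝ))) = s) ∧
    (∀ t : ℝ, ∀ s ∈ Set.Icc (0:ℝ) 1,
      1 - (1 - (1 - (1 - s) ^ (Real.exp t))) ^ (Real.exp (-t)) = s ∧
      1 - (1 - (1 - (1 - s) ^ (Real.exp (-t)))) ^ (Real.exp t) = s) ∧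
    ∀ s ∈ Set.Ioo (0:ℝ) 1, ∀ α : ℝ, 0 < α →
      Tendsto (fun t : ℝ =>
          1 - (1 - (1 - (1 - s) ^ (Real.exp t)) ^ α) ^ (Real.exp (-t)))
        atTop (nhds s) := by
  refine ⟨?_, ?_, ?_, ?_⟩
  · intro s hs t
    have ha : (0:ℝ) < 1 - s := by linarith [hs.2]
    have hrw : ∀ u : ℝ, (1 - s) ^ u = Real.exp (u * Real.log (1 - s)) := fun u => by
      rw [Real.rpow_def_of_pos ha, mul_comm]
    have hinner : HasDerivAt (fun t : ℝ => Real.exp (-t) * Real.log (1 - s))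
        (-Real.exp (-t) * Real.log (1 - s)) t := by
      have := ((Real.hasDerivAt_exp (-t)).comp t ((hasDerivAt_id t).neg)).mul_const
        (Real.log (1 - s))
      simpa [mul_comm] using this
    have h2 : HasDerivAt (fun t : ℝ => 1 - (1 - s) ^ (Real.exp (-t)))
        (-(Real.exp (Real.exp (-t) * Real.log (1 - s)) *
          (-Real.exp (-t) * Real.log (1 - s)))) t := by
      have := ((Real.hasDerivAt_exp (Real.exp (-t) * Real.log (1 - s))).comp t
        hinner).const_sub 1
      simpa [hrw] using this
    convert h2 using 1
    have hlog : Real.log (1 - (1 - (1 - s) ^ Real.exp (-t))) =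
        Real.exp (-t) * Real.log (1 - s) := by
      rw [sub_sub_cancel, Real.log_rpow ha]
    rw [hlog, sub_sub_cancel, hrw]
    ring
  · intro s hs
    rw [neg_zero, Real.exp_zero, Real.rpow_one]; ring
  · intro t s hs
    have ha : (0:ℝ) ≤ 1 - s := by linarith [hs.2]
    constructor
    · rw [sub_sub_cancel, ← Real.rpow_mul ha, ← Real.exp_add]
      simp
    · rw [sub_sub_cancel, ← Real.rpow_mul ha, ← Real.exp_add]
      simp
  · intro s hs α hα
    set a : ℝ := 1 - s with hadef
    have ha0 : (0:ℝ) < a := by simp [hadef]; linarith [hs.2]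
    have ha1 : a < 1 := by simp [hadef]; linarith [hs.1]
    set u : ℝ → ℝ := fun t => a ^ Real.exp t with hu
    have hu0 : ∀ t, 0 < u t := fun t => Real.rpow_pos_of_pos ha0 _
    have hu1 : ∀ t, u t < 1 := fun t =>
      Real.rpow_lt_one ha0.le ha1 (Real.exp_pos t)
    set v : ℝ → ℝ := fun t => 1 - (1 - u t) ^ α with hv
    have hv0 : ∀ t, 0 < v t := by
      intro t
      have : (1 - u t) ^ α < 1 :=
        Real.rpow_lt_one (by linarith [hu1 t]) (by linarith [hu0 t]) hα
      simp only [hv]; linarith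
    -- u tendsto 0 within ≠ 0
    have huT : Tendsto u atTop (𝓝 0) := by
      have h1 : Tendsto (fun p : ℝ => a ^ p) atTop (𝓝 0) :=
        tendsto_rpow_atTop_of_base_lt_one a (by linarith) ha1
      exact h1.comp Real.tendsto_exp_atTop
    have huT' : Tendsto u atTop (𝓝[≠] 0) :=
      tendsto_nhdsWithin_of_tendsto_nhds_of_eventually_within _ huT
        (Eventually.of_forall fun t => (hu0 t).ne')
    -- slope of g x = 1 - (1-x)^α at 0 is α
    have hg : HasDerivAt (fun x : ℝ => 1 - (1 - x) ^ α) α 0 := by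
      have h1 : HasDerivAt (fun x : ℝ => x ^ α) (α * (1:ℝ) ^ (α - 1)) 1 :=
        Real.hasDerivAt_rpow_const (Or.inl one_ne_zero)
      have h1' : HasDerivAt (fun x : ℝ => x ^ α) (α * (1:ℝ) ^ (α - 1))
          ((fun x : ℝ => 1 - x) 0) := by simpa using h1
      have h2 : HasDerivAt (fun x : ℝ => (1 - x) ^ α)
          (α * (1:ℝ) ^ (α - 1) * (-1)) 0 := by
        have := h1'.comp (0:ℝ) ((hasDerivAt_id (0:ℝ)).const_sub 1)
        exact this.congr_deriv (by simp)
      have := h2.const_sub 1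
      simpa using this
    have hslope := hasDerivAt_iff_tendsto_slope.mp hg
    have hvu : Tendsto (fun t => v t / u t) atTop (𝓝 α) := by
      have := hslope.comp huT'
      refine this.congr fun t => ?_
      simp [slope_def_field, hv]
    have hlogvu : Tendsto (fun t => Real.log (v t / u t)) atTop (𝓝 (Real.log α)) :=
      ((Real.continuousAt_log hα.ne').tendsto).comp hvu
    have hexpneg : Tendsto (fun t : ℝ => Real.exp (-t)) atTop (𝓝 0) :=
      Real.tendsto_exp_atBot.comp tendsto_neg_atTop_atBot
    have hprod : Tendsto (fun t => Real.exp (-t) * Real.log (v t / u t)) atTop (𝓝 0) := by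
      have := hexpneg.mul hlogvu
      simpa using this
    have hkey : Tendsto (fun t => Real.exp (-t) * Real.log (v t)) atTop (𝓝 (Real.log a)) := by
      have heq : ∀ t, Real.exp (-t) * Real.log (v t) =
          Real.log a + Real.exp (-t) * Real.log (v t / u t) := by
        intro t
        have : Real.log (v t) = Real.log (v t / u t) + Real.log (u t) := by
          rw [← Real.log_mul (div_pos (hv0 t) (hu0 t)).ne' (hu0 t).ne', div_mul_cancel₀ _ (hu0 t).ne']
        rw [this, Real.log_rpow ha0, mul_add]
        have : Real.exp (-t) * (Real.exp t * Real.log a) = Real.log a := by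
          rw [← mul_assoc, ← Real.exp_add]; simp
        rw [this]; ring
      rw [show (𝓝 (Real.log a)) = 𝓝 (Real.log a + 0) by simp]
      exact (tendsto_const_nhds.add hprod).congr fun t => (heq t).symm
    have hmain : Tendsto (fun t => 1 - Real.exp (Real.exp (-t) * Real.log (v t)))
        atTop (𝓝 (1 - a)) := by
      have := (Real.continuous_exp.continuousAt.tendsto.comp hkey).const_sub 1
      rwa [Real.exp_log ha0] at this
    have : (1 : ℝ) - a = s := by simp [hadef]
    rw [← this]
    refine hmain.congr fun t => ?_
    rw [Real.rpow_def_of_pos (hv0 t)]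
    ring_nf
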